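/- Let (Ω, ℱ, P) be a probability space, (E, ℰ) and (E', ℰ') measurable spaces, and X : Ω → E, Y : Ω → E', Ỹ : Ω → E' measurable maps such that X and Ỹ are independent, Y and Ỹ have the same distribution, and the event {ω ∈ Ω : Y(ω) ≠ Ỹ(ω)} is measurable. Then for all bounded measurable functions f : E → ℝ and g : E' → ℝ: | E[f(X) g(Y)] − E[f(X)] E[g(Y)] | ≤ 2 ‖f‖_∞ ‖g‖_∞ P( Y ≠ Ỹ ). -/

import Mathlib

open MeasureTheory ProbabilityTheory

/-- Coupling estimate: if `X` and `Y'` are independent, `Y` and `Y'` are identically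
distributed, then for bounded measurable `f`, `g`:
`|E[f(X)g(Y)] − E[f(X)]E[g(Y)]| ≤ 2 ‖f‖_∞ ‖g‖_∞ P(Y ≠ Y')`. -/
theorem stmt15 {Ω E E' : Type*} [MeasurableSpace Ω] [MeasurableSpace E]
    [MeasurableSpace E'] (P : Measure Ω) [IsProbabilityMeasure P]
    (X : Ω → E) (Y Y' : Ω → E')
    (hX : Measurable X) (hY : Measurable Y) (hY' : Measurable Y')
    (hindep : IndepFun X Y' P)
    (hident : IdentDistrib Y Y' P P)
    (hne : MeasurableSet {ω | Y ω ≠ Y' ω})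
    (f : E → ℝ) (g : E' → ℝ) (hf : Measurable f) (hg : Measurable g)
    (hfb : BddAbove (Set.range fun x => |f x|))
    (hgb : BddAbove (Set.range fun y => |g y|)) :
    |(∫ ω, f (X ω) * g (Y ω) ∂P) - (∫ ω, f (X ω) ∂P) * ∫ ω, g (Y ω) ∂P| ≤
      2 * sSup (Set.range fun x => |f x|) * sSup (Set.range fun y => |g y|) *
        (P {ω | Y ω ≠ Y' ω}).toReal := by
  have hΩ : Nonempty Ω := by
    by_contra h
    rw [not_nonempty_iff] at h
    have h1 := measure_univ (μ := P)
    rw [Set.univ_eq_empty_iff.2 h, measure_empty] at h1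
    exact zero_ne_one h1
  obtain ⟨ω0⟩ := hΩ
  set Mf := sSup (Set.range fun x => |f x|) with hMf
  set Mg := sSup (Set.range fun y => |g y|) with hMg
  have hfle : ∀ x, |f x| ≤ Mf := fun x => le_csSup hfb ⟨x, rfl⟩
  have hgle : ∀ y, |g y| ≤ Mg := fun y => le_csSup hgb ⟨y, rfl⟩
  have hMf0 : 0 ≤ Mf := (abs_nonneg _).trans (hfle (X ω0))
  have hMg0 : 0 ≤ Mg := (abs_nonneg _).trans (hgle (Y ω0))
  set s := {ω | Y ω ≠ Y' ω} with hs
  -- integrability helper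
  have hbdd : ∀ (h : Ω → ℝ) (C : ℝ), Measurable h → (∀ ω, |h ω| ≤ C) →
      Integrable h P := fun h C hm hb =>
    (integrable_const C).mono' hm.aestronglyMeasurable
      (Filter.Eventually.of_forall fun ω => by simpa using hb ω)
  have hiX : Integrable (fun ω => f (X ω)) P :=
    hbdd _ Mf (hf.comp hX) fun ω => hfle _
  have hiY : Integrable (fun ω => g (Y ω)) P :=
    hbdd _ Mg (hg.comp hY) fun ω => hgle _
  have hiY' : Integrable (fun ω => g (Y' ω)) P :=
    hbdd _ Mg (hg.comp hY') fun ω => hgle _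
  have hiXY : Integrable (fun ω => f (X ω) * g (Y ω)) P :=
    hbdd _ (Mf * Mg) ((hf.comp hX).mul (hg.comp hY)) fun ω => by
      rw [abs_mul]; exact mul_le_mul (hfle _) (hgle _) (abs_nonneg _) hMf0
  have hiXY' : Integrable (fun ω => f (X ω) * g (Y' ω)) P :=
    hbdd _ (Mf * Mg) ((hf.comp hX).mul (hg.comp hY')) fun ω => by
      rw [abs_mul]; exact mul_le_mul (hfle _) (hgle _) (abs_nonneg _) hMf0
  -- independence factorization
  have hfact : (∫ ω, f (X ω) * g (Y' ω) ∂P)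
      = (∫ ω, f (X ω) ∂P) * ∫ ω, g (Y' ω) ∂P :=
    IndepFun.integral_fun_mul_eq_mul_integral (hindep.comp hf hg) hiX.aestronglyMeasurable hiY'.aestronglyMeasurable
  -- identical distribution
  have hid : (∫ ω, g (Y ω) ∂P) = ∫ ω, g (Y' ω) ∂P :=
    (hident.comp hg).integral_eq
  have hrw : (∫ ω, f (X ω) * g (Y ω) ∂P) - (∫ ω, f (X ω) ∂P) * ∫ ω, g (Y ω) ∂P
      = ∫ ω, (f (X ω) * g (Y ω) - f (X ω) * g (Y' ω)) ∂P := by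
    rw [integral_sub hiXY hiXY', hid, hfact]
  rw [hrw]
  have hind : Integrable (s.indicator fun _ => 2 * Mf * Mg) P :=
    (integrable_const _).indicator hne
  have hptw : ∀ ω, |f (X ω) * g (Y ω) - f (X ω) * g (Y' ω)|
      ≤ s.indicator (fun _ => 2 * Mf * Mg) ω := by
    intro ω
    by_cases hω : ω ∈ s
    · rw [Set.indicator_of_mem hω, ← mul_sub, abs_mul]
      calc |f (X ω)| * |g (Y ω) - g (Y' ω)|
          ≤ Mf * (Mg + Mg) := by
            apply mul_le_mul (hfle _) ?_ (abs_nonneg _) hMf0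
            exact (abs_sub _ _).trans (add_le_add (hgle _) (hgle _))
        _ = 2 * Mf * Mg := by ring
    · rw [Set.indicator_of_notMem hω]
      have : Y ω = Y' ω := not_not.mp hω
      rw [this]
      simp
  calc |∫ ω, (f (X ω) * g (Y ω) - f (X ω) * g (Y' ω)) ∂P|
      ≤ ∫ ω, |f (X ω) * g (Y ω) - f (X ω) * g (Y' ω)| ∂P :=
        by simpa [Real.norm_eq_abs] using norm_integral_le_integral_norm (fun ω => f (X ω) * g (Y ω) - f (X ω) * g (Y' ω))
    _ ≤ ∫ ω, s.indicator (fun _ => 2 * Mf * Mg) ω ∂P :=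
        integral_mono (hiXY.sub hiXY').abs hind hptw
    _ = 2 * Mf * Mg * (P s).toReal := by
        rw [integral_indicator_const _ hne]
        simp [mul_comm, measureReal_def]
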